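/- For every Schwartz function f on R^d there exist a Schwartz function f_0 on R^d and a strictly positive, rotation-invariant Schwartz function g on R^d such that f(x) = f_0(x) g(x) for all x. -/

import Mathlib

open scoped ContDiff Nat SchwartzMap

noncomputable section Aux

section InnerLemmas
variable {E : Type*} [NormedAddCommGroup E] [InnerProductSpace ℝ E]

variable {E : Type*} [NormedAddCommGroup E] [InnerProductSpace ℝ E]

/-- iterated derivatives of the identity are bounded by 1 + ‖x‖ -/
lemma id_iter_bound (i : ℕ) (x : E) :
    ‖iteratedFDeriv ℝ i (fun y : E => y) x‖ ≤ 1 + ‖x‖ := by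
  match i with
  | 0 => simpa [norm_iteratedFDeriv_zero] using by linarith [norm_nonneg x]
  | 1 =>
    have h0 : ‖iteratedFDeriv ℝ 0 (fderiv ℝ (fun y : E => y)) x‖
        = ‖iteratedFDeriv ℝ 1 (fun y : E => y) x‖ := norm_iteratedFDeriv_fderiv
    rw [← h0, norm_iteratedFDeriv_zero, fderiv_id']
    have := ContinuousLinearMap.norm_id_le (E := E) (𝕜 := ℝ)
    linarith [norm_nonneg x]
  | (n+2) =>
    have h0 : ‖iteratedFDeriv ℝ (n+1) (fderiv ℝ (fun y : E => y)) x‖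
        = ‖iteratedFDeriv ℝ (n+2) (fun y : E => y) x‖ := norm_iteratedFDeriv_fderiv
    have h1 : (fderiv ℝ (fun y : E => y)) = fun _ : E => ContinuousLinearMap.id ℝ E := by
      funext z; exact fderiv_id'
    rw [← h0, h1, iteratedFDeriv_const_of_ne (by omega)]
    simp
    positivity

/-- iterated derivatives of ‖·‖² -/
lemma normsq_iter_bound (i : ℕ) (x : E) :
    ‖iteratedFDeriv ℝ i (fun y : E => ‖y‖^2) x‖ ≤ 2^i * (1+‖x‖)^2 := by
  have hfun : (fun y : E => ‖y‖^2) = fun y : E => (innerSL ℝ y) y := by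
    funext y; rw [innerSL_apply_apply, real_inner_self_eq_norm_sq]
  rw [hfun]
  have h := (innerSL ℝ (E := E)).norm_iteratedFDeriv_le_of_bilinear_of_le_one
    (f := fun y : E => y) (g := fun y : E => y) (N := (⊤ : WithTop ℕ∞))
    contDiff_id contDiff_id x (n := i) le_top (norm_innerSL_le ℝ)
  refine h.trans ?_
  have : ∀ j ∈ Finset.range (i+1),
      (i.choose j : ℝ) * ‖iteratedFDeriv ℝ j (fun y : E => y) x‖ *
        ‖iteratedFDeriv ℝ (i - j) (fun y : E => y) x‖ ≤ (i.choose j : ℝ) * (1+‖x‖)^2 := by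
    intro j _
    have h1 := id_iter_bound (E := E) j x
    have h2 := id_iter_bound (E := E) (i - j) x
    have hx : (0:ℝ) ≤ 1 + ‖x‖ := by positivity
    calc (i.choose j : ℝ) * ‖iteratedFDeriv ℝ j (fun y : E => y) x‖ *
          ‖iteratedFDeriv ℝ (i - j) (fun y : E => y) x‖
        ≤ (i.choose j : ℝ) * (1+‖x‖) * (1+‖x‖) := by
          gcongr <;> simp [norm_nonneg]
      _ = (i.choose j : ℝ) * (1+‖x‖)^2 := by ring
  refine (Finset.sum_le_sum this).trans ?_
  rw [← Finset.sum_mul, ← Nat.cast_sum]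
  rw [Nat.sum_range_choose]
  have h2 : ((2:ℝ)^i) ≤ 2^i * 1 := by norm_num
  have hx2 : (1:ℝ) ≤ (1+‖x‖)^2 := by nlinarith [norm_nonneg x]
  push_cast
  nlinarith [pow_pos (by norm_num : (0:ℝ) < 2) i]

variable {E : Type*} [NormedAddCommGroup E] [InnerProductSpace ℝ E]

lemma exp_iter_norm (i : ℕ) (t : ℝ) : ‖iteratedFDeriv ℝ i Real.exp t‖ = Real.exp t := by
  rw [norm_iteratedFDeriv_eq_norm_iteratedDeriv, iteratedDeriv_eq_iterate, Real.iter_deriv_exp,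
    Real.norm_eq_abs, Real.abs_exp]

lemma inner_contdiff (c : ℝ) : ContDiff ℝ (⊤ : WithTop ℕ∞) (fun y : E => -(c * ‖y‖^2)) :=
  (contDiff_const.mul (contDiff_norm_sq ℝ)).neg

lemma inner_iter_bound (c : ℝ) (hc0 : 0 ≤ c) (hc1 : c ≤ 1) (i : ℕ) (hi : 1 ≤ i) (x : E) :
    ‖iteratedFDeriv ℝ i (fun y : E => -(c * ‖y‖^2)) x‖ ≤ (2*(1+‖x‖)^2)^i := by
  have h1 : (fun y : E => -(c * ‖y‖^2)) = (-c) • (fun y : E => ‖y‖^2) := by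
    funext y; simp only [Pi.smul_apply, smul_eq_mul]; ring
  rw [h1, iteratedFDeriv_const_smul_apply ((contDiff_norm_sq ℝ).of_le le_top).contDiffAt]
  have hns := norm_smul (-c) (iteratedFDeriv ℝ i (fun y : E => ‖y‖^2) x)
  rw [hns]
  have h2 := normsq_iter_bound i x
  have hx : (1:ℝ) ≤ (1+‖x‖) := by linarith [norm_nonneg x]
  have hx2 : (1:ℝ) ≤ (1+‖x‖)^2 := by nlinarith
  have h3 : (2:ℝ)^i * (1+‖x‖)^2 ≤ (2*(1+‖x‖)^2)^i := by
    rw [mul_pow]; gcongr; exact le_self_pow₀ hx2 (by omega)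
  have hnc : ‖(-c : ℝ)‖ ≤ 1 := by rw [Real.norm_eq_abs, abs_neg, abs_of_nonneg hc0]; exact hc1
  calc ‖(-c:ℝ)‖ * ‖iteratedFDeriv ℝ i (fun y : E => ‖y‖^2) x‖
      ≤ 1 * (2^i * (1+‖x‖)^2) := mul_le_mul hnc h2 (norm_nonneg _) zero_le_one
    _ ≤ (2*(1+‖x‖)^2)^i := by rw [one_mul]; exact h3

lemma gauss_iter_bound (c : ℝ) (hc0 : 0 ≤ c) (hc1 : c ≤ 1) (m : ℕ) (x : E) :
    ‖iteratedFDeriv ℝ m (fun y : E => Real.exp (-(c * ‖y‖^2))) x‖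
      ≤ (m ! : ℝ) * Real.exp (-(c * ‖x‖^2)) * (2*(1+‖x‖)^2)^m := by
  have hcomp : (fun y : E => Real.exp (-(c * ‖y‖^2)))
      = Real.exp ∘ (fun y : E => -(c * ‖y‖^2)) := rfl
  rw [hcomp]
  refine norm_iteratedFDeriv_comp_le (N := (⊤:WithTop ℕ∞)) Real.contDiff_exp (inner_contdiff c)
    le_top x (fun i _ => ?_) (fun i h1 h2 => inner_iter_bound c hc0 hc1 i h1 x)
  rw [exp_iter_norm]

lemma inv_iter_norm (i : ℕ) (t : ℝ) (ht : 0 < t) :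
    ‖iteratedFDeriv ℝ i (Inv.inv : ℝ → ℝ) t‖ = (i ! : ℝ) * (t^(i+1))⁻¹ := by
  rw [norm_iteratedFDeriv_eq_norm_iteratedDeriv, iteratedDeriv_eq_iterate, iter_deriv_inv,
    Real.norm_eq_abs, abs_mul]
  congr 1
  · rw [abs_mul, abs_pow, abs_neg, abs_one, one_pow, one_mul, Nat.abs_cast]
  · have hz : (-1 - (i:ℤ)) = -((i:ℤ)+1) := by ring
    rw [hz, zpow_neg, abs_inv, ← zpow_natCast t (i+1)]
    push_cast
    rw [abs_of_pos (by positivity)]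

end InnerLemmas

lemma one_add_pow_le_exp (r : ℝ) (hr : 0 ≤ r) (m : ℕ) (hm : 1 ≤ m) :
    (1+r)^m ≤ (m:ℝ)^m * Real.exp r := by
  have hm1 : (1:ℝ) ≤ (m:ℝ) := by exact_mod_cast hm
  have h1 : (1+r) ≤ (m:ℝ) * (1 + r/(m:ℝ)) := by
    rw [mul_add, mul_one, mul_div_cancel₀ _ (by positivity)]
    linarith
  have h2 : (1:ℝ) + r/(m:ℝ) ≤ Real.exp (r/(m:ℝ)) := by
    rw [add_comm]; exact Real.add_one_le_exp _
  have h3 : (1+r)^m ≤ ((m:ℝ) * Real.exp (r/(m:ℝ)))^m := by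
    apply pow_le_pow_left₀ (by positivity)
    calc (1+r) ≤ (m:ℝ) * (1 + r/(m:ℝ)) := h1
      _ ≤ (m:ℝ) * Real.exp (r/(m:ℝ)) := by
          apply mul_le_mul_of_nonneg_left h2 (by positivity)
  refine h3.trans ?_
  rw [mul_pow, ← Real.exp_nat_mul]
  rw [mul_div_cancel₀ _ (by positivity : (m:ℝ) ≠ 0)]

lemma poly_gauss_bound (m : ℕ) (a r : ℝ) (ha : 1 ≤ a) (hr : 0 ≤ r) :
    (2*(1+r)^2)^m * Real.exp (-(a⁻¹ * r^2)) ≤ (8*a^2)^m * ((2*(m:ℝ))^(2*m) + 1) := by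
  have ha0 : (0:ℝ) < a := by linarith
  have hexp1 : Real.exp (-(a⁻¹ * r^2)) ≤ 1 := by
    rw [Real.exp_le_one_iff]
    have : (0:ℝ) ≤ a⁻¹ * r^2 := by positivity
    linarith
  have hRHS1 : (1:ℝ) ≤ (2*(m:ℝ))^(2*m) + 1 := by
    have := pow_nonneg (show (0:ℝ) ≤ 2*(m:ℝ) by positivity) (2*m); linarith
  have h8a : (0:ℝ) < 8*a^2 := by positivity
  rcases le_or_gt r a with hcase | hcase
  · -- r ≤ a
    have h1 : (2*(1+r)^2)^m ≤ (8*a^2)^m := by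
      apply pow_le_pow_left₀ (by positivity)
      nlinarith
    calc (2*(1+r)^2)^m * Real.exp (-(a⁻¹ * r^2))
        ≤ (8*a^2)^m * 1 := by
          apply mul_le_mul h1 hexp1 (Real.exp_nonneg _) (by positivity)
      _ ≤ (8*a^2)^m * ((2*(m:ℝ))^(2*m) + 1) := by
          apply mul_le_mul_of_nonneg_left hRHS1 (by positivity)
  · -- a < r
    rcases Nat.eq_zero_or_pos m with hm | hm
    · subst hm
      simp only [pow_zero, one_mul, Nat.mul_zero]
      calc Real.exp (-(a⁻¹ * r^2)) ≤ 1 := hexp1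
        _ ≤ 1 * ((2*(0:ℕ):ℝ)^(0:ℕ) + 1) := by norm_num
        _ = _ := by norm_num
    · have hm2 : 1 ≤ 2*m := by omega
      have hra : a⁻¹ * r^2 ≥ r := by
        rw [ge_iff_le, ← sub_nonneg]
        have : a⁻¹ * r^2 - r = a⁻¹ * (r * (r - a)) := by field_simp
        rw [this]
        have h0 : 0 ≤ r - a := by linarith
        positivity
      have hexp2 : Real.exp (-(a⁻¹ * r^2)) ≤ Real.exp (-r) := by
        apply Real.exp_le_exp.2; linarith
      have hpow : (1+r)^(2*m) ≤ ((2*m:ℕ):ℝ)^(2*m) * Real.exp r := by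
        exact_mod_cast one_add_pow_le_exp r hr (2*m) hm2
      have key : (2*(1+r)^2)^m * Real.exp (-(a⁻¹ * r^2))
          ≤ 2^m * ((2*m:ℕ):ℝ)^(2*m) := by
        have e1 : (2*(1+r)^2)^m = 2^m * (1+r)^(2*m) := by
          rw [mul_pow, ← pow_mul]
        rw [e1]
        calc 2^m * (1+r)^(2*m) * Real.exp (-(a⁻¹ * r^2))
            ≤ 2^m * (((2*m:ℕ):ℝ)^(2*m) * Real.exp r) * Real.exp (-r) := by
              apply mul_le_mul (by apply mul_le_mul_of_nonneg_left hpow (by positivity))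
                hexp2 (Real.exp_nonneg _) (by positivity)
          _ = 2^m * ((2*m:ℕ):ℝ)^(2*m) * (Real.exp r * Real.exp (-r)) := by ring
          _ = 2^m * ((2*m:ℕ):ℝ)^(2*m) := by
              rw [← Real.exp_add, add_neg_cancel, Real.exp_zero, mul_one]
      refine key.trans ?_
      have h2m : ((2*m:ℕ):ℝ)^(2*m) = (2*(m:ℝ))^(2*m) := by push_cast; ring_nf
      rw [h2m]
      have h1 : (2:ℝ)^m ≤ (8*a^2)^m := by
        apply pow_le_pow_left₀ (by norm_num)
        nlinarith
      nlinarith [pow_pos (show (0:ℝ) < 2 by norm_num) m,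
        pow_nonneg (show (0:ℝ) ≤ 2*(m:ℝ) by positivity) (2*m),
        pow_pos h8a m]

section Seq
variable {E F : Type*} [NormedAddCommGroup E] [NormedSpace ℝ E]
  [NormedAddCommGroup F] [NormedSpace ℝ F]

def Qf (f : 𝓢(E, F)) (j : ℕ) : ℝ :=
  2^j * ((Finset.Iic (j,j)).sup (fun m => SchwartzMap.seminorm ℝ m.1 m.2)) f + 1

lemma Qf_one_le (f : 𝓢(E, F)) (j : ℕ) : 1 ≤ Qf f j := by
  have h : (0:ℝ) ≤ ((Finset.Iic (j,j)).sup (fun m => SchwartzMap.seminorm ℝ m.1 m.2)) f :=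
    apply_nonneg _ _
  have : (0:ℝ) < 2^j := by positivity
  unfold Qf; nlinarith

lemma Qf_pos (f : 𝓢(E, F)) (j : ℕ) : 0 < Qf f j := lt_of_lt_of_le one_pos (Qf_one_le f j)

lemma Qf_mono (f : 𝓢(E, F)) {j j' : ℕ} (h : j ≤ j') : Qf f j ≤ Qf f j' := by
  unfold Qf
  have h1 : ((Finset.Iic (j,j)).sup (fun m => SchwartzMap.seminorm ℝ m.1 m.2)) f
      ≤ ((Finset.Iic (j',j')).sup (fun m => SchwartzMap.seminorm ℝ m.1 m.2)) f := by
    have hsub : Finset.Iic ((j,j) : ℕ × ℕ) ⊆ Finset.Iic (j',j') := by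
      intro p hp
      simp only [Finset.mem_Iic] at *
      exact le_trans hp (by exact ⟨h, h⟩)
    exact Seminorm.le_def.mp (Finset.sup_mono hsub) f
  have h2 : (2:ℝ)^j ≤ 2^j' := by apply pow_le_pow_right₀ (by norm_num) h
  have h0 : (0:ℝ) ≤ ((Finset.Iic (j,j)).sup (fun m => SchwartzMap.seminorm ℝ m.1 m.2)) f :=
    apply_nonneg _ _
  nlinarith [pow_pos (show (0:ℝ)<2 by norm_num) j, pow_pos (show (0:ℝ)<2 by norm_num) j']

lemma Qf_bound (f : 𝓢(E, F)) {p i j : ℕ} (hp : p ≤ j) (hi : i ≤ j) (x : E) :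
    (1+‖x‖)^p * ‖iteratedFDeriv ℝ i (⇑f) x‖ ≤ Qf f j := by
  have := SchwartzMap.one_add_le_sup_seminorm_apply (𝕜 := ℝ) (m := (j,j)) hp hi f x
  unfold Qf
  linarith

def epsf (f : 𝓢(E, F)) (k : ℕ) : ℝ :=
  (Finset.Iic k).inf' ⟨0, Finset.mem_Iic.mpr (Nat.zero_le k)⟩
    (fun j => min 1 (Qf f (j^2) * (((k:ℝ))^j)⁻¹))

lemma epsf_pos (f : 𝓢(E, F)) (k : ℕ) : 0 < epsf f k := by
  rw [epsf]; refine (Finset.lt_inf'_iff _).2 ?_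
  intro j hj
  rcases Nat.eq_zero_or_pos k with hk | hk
  · subst hk
    simp only [Finset.mem_Iic, Nat.le_zero] at hj
    subst hj
    simp [Qf_pos f 0]
  · have : (0:ℝ) < (k:ℝ)^j := by positivity
    have := Qf_pos f (j^2)
    positivity

lemma epsf_le_one (f : 𝓢(E, F)) (k : ℕ) : epsf f k ≤ 1 := by
  refine le_trans (Finset.inf'_le _ (Finset.mem_Iic.mpr (Nat.zero_le k))) ?_
  exact min_le_left _ _

lemma epsf_le (f : 𝓢(E, F)) {N k : ℕ} (h : N ≤ k) :
    epsf f k ≤ Qf f (N^2) * (((k:ℝ))^N)⁻¹ := by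
  refine le_trans (Finset.inf'_le _ (Finset.mem_Iic.mpr h)) (min_le_right _ _)

lemma epsf_key (f : 𝓢(E, F)) (M n r : ℕ) :
    ∃ C : ℝ, 0 < C ∧ ∀ x : E,
      (1+‖x‖)^M * ‖iteratedFDeriv ℝ n (⇑f) x‖ ≤ C * (epsf f ⌈‖x‖^2⌉₊)^r := by
  set Jb := max (2*(2*r+M+n)*r + M) (max M n) with hJb
  refine ⟨Qf f Jb, Qf_pos f Jb, fun x => ?_⟩
  set k := ⌈‖x‖^2⌉₊ with hk
  have hx1 : (1:ℝ) ≤ 1 + ‖x‖ := by linarith [norm_nonneg x]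
  have hkle : (k:ℝ) ≤ (1+‖x‖)^2 := by
    have h1 : (k:ℝ) < ‖x‖^2 + 1 := Nat.ceil_lt_add_one (by positivity)
    nlinarith [norm_nonneg x]
  -- the trivial bound, used in the `epsf = 1` and `r = 0` cases
  have htriv : (1+‖x‖)^M * ‖iteratedFDeriv ℝ n (⇑f) x‖ ≤ Qf f Jb :=
    (Qf_bound f (le_trans (le_max_left M n) (le_max_right _ _))
      (le_trans (le_max_right M n) (le_max_right _ _)) x)
  obtain ⟨j₀, hj₀mem, hj₀⟩ := Finset.exists_mem_eq_inf'
    (⟨0, Finset.mem_Iic.mpr (Nat.zero_le k)⟩ : (Finset.Iic k).Nonempty)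
    (fun j => min 1 (Qf f (j^2) * (((k:ℝ))^j)⁻¹))
  have heps : epsf f k = min 1 (Qf f (j₀^2) * (((k:ℝ))^j₀)⁻¹) := hj₀
  rcases Nat.eq_zero_or_pos r with hr | hr
  · subst hr
    simpa using htriv
  set A := Qf f (j₀^2) * (((k:ℝ))^j₀)⁻¹ with hA
  rcases le_or_gt 1 A with hc | hc
  · -- epsf = 1
    have h1 : epsf f k = 1 := by rw [heps, min_eq_left hc]
    rw [h1, one_pow, mul_one]
    exact htriv
  · -- epsf = A < 1
    have h1 : epsf f k = A := by rw [heps, min_eq_right hc.le]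
    have hj₀pos : 1 ≤ j₀ := by
      by_contra h
      push_neg at h
      interval_cases j₀
      · simp only [hA, pow_zero, pow_zero, inv_one, mul_one] at hc
        exact absurd hc (not_lt.mpr (Qf_one_le f 0))
    have hkpos : 1 ≤ k := by
      by_contra h
      push_neg at h
      interval_cases k
      · have := Finset.mem_Iic.mp hj₀mem; omega
    have hkR : (1:ℝ) ≤ (k:ℝ) := by exact_mod_cast hkpos
    set j' := 2*j₀*r + M with hj'
    set J := max j' n with hJ
    -- main chain
    have hQJ : Qf f J ≤ Qf f Jb * Qf f (j₀^2) := by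
      rcases le_or_gt (2*r+M+n) j₀ with hbig | hsmall
      · have hsq : J ≤ j₀^2 := by
          have h1 : j' ≤ j₀ * (2*r+M+n) := by
            rw [hj']; ring_nf; nlinarith [hj₀pos]
          have h2 : n ≤ j₀ * (2*r+M+n) := by nlinarith [hj₀pos]
          have h3 : j₀ * (2*r+M+n) ≤ j₀^2 := by nlinarith
          omega
        calc Qf f J ≤ Qf f (j₀^2) := Qf_mono f hsq
          _ ≤ Qf f Jb * Qf f (j₀^2) := by
              nlinarith [Qf_one_le f Jb, Qf_pos f (j₀^2)]
      · have hsq : J ≤ Jb := by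
          have : j' ≤ 2*(2*r+M+n)*r + M := by rw [hj']; nlinarith
          omega
        calc Qf f J ≤ Qf f Jb := Qf_mono f hsq
          _ ≤ Qf f Jb * Qf f (j₀^2) := by
              nlinarith [Qf_one_le f (j₀^2), Qf_pos f Jb]
    have hQr : Qf f (j₀^2) ≤ (Qf f (j₀^2))^r :=
      le_self_pow₀ (Qf_one_le f (j₀^2)) (by omega)
    have hmain : (1+‖x‖)^M * ‖iteratedFDeriv ℝ n (⇑f) x‖ * ((k:ℝ)^(j₀*r))
        ≤ Qf f J := by
      have hb := Qf_bound f (le_max_left j' n) (le_max_right j' n) x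
      have hpow : ((k:ℝ))^(j₀*r) ≤ (1+‖x‖)^(2*j₀*r) := by
        calc ((k:ℝ))^(j₀*r) ≤ ((1+‖x‖)^2)^(j₀*r) :=
              pow_le_pow_left₀ (by positivity) hkle _
          _ = (1+‖x‖)^(2*(j₀*r)) := by rw [← pow_mul]
          _ = (1+‖x‖)^(2*j₀*r) := by ring_nf
      calc (1+‖x‖)^M * ‖iteratedFDeriv ℝ n (⇑f) x‖ * ((k:ℝ)^(j₀*r))
          ≤ (1+‖x‖)^M * ‖iteratedFDeriv ℝ n (⇑f) x‖ * (1+‖x‖)^(2*j₀*r) := by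
            apply mul_le_mul_of_nonneg_left hpow (by positivity)
        _ = (1+‖x‖)^(M + 2*j₀*r) * ‖iteratedFDeriv ℝ n (⇑f) x‖ := by
            rw [pow_add]; ring
        _ = (1+‖x‖)^j' * ‖iteratedFDeriv ℝ n (⇑f) x‖ := by
            congr 2; omega
        _ ≤ Qf f J := hb
    -- put it together
    rw [h1]
    have hApow : A^r = (Qf f (j₀^2))^r * (((k:ℝ))^(j₀*r))⁻¹ := by
      rw [hA, mul_pow, inv_pow, ← pow_mul]
    have hkpow : (0:ℝ) < (k:ℝ)^(j₀*r) := by positivity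
    rw [hApow]
    -- final: LHS ≤ Qf Jb * (Qf (j₀²))^r * (k^(j₀ r))⁻¹
    have : (1+‖x‖)^M * ‖iteratedFDeriv ℝ n (⇑f) x‖
        ≤ Qf f Jb * (Qf f (j₀^2))^r * ((k:ℝ)^(j₀*r))⁻¹ := by
      rw [← le_div_iff₀ hkpow] at hmain
      refine hmain.trans ?_
      rw [div_eq_mul_inv]
      have h2 : Qf f J ≤ Qf f Jb * (Qf f (j₀^2))^r := by
        refine hQJ.trans ?_
        nlinarith [Qf_pos f Jb, Qf_pos f (j₀^2)]
      apply mul_le_mul_of_nonneg_right h2 (by positivity)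
    calc (1+‖x‖)^M * ‖iteratedFDeriv ℝ n (⇑f) x‖
        ≤ Qf f Jb * (Qf f (j₀^2))^r * ((k:ℝ)^(j₀*r))⁻¹ := this
      _ = Qf f Jb * ((Qf f (j₀^2))^r * ((k:ℝ)^(j₀*r))⁻¹) := by ring
end Seq

section GGsec
variable {E F : Type*} [NormedAddCommGroup E] [InnerProductSpace ℝ E]
  [NormedAddCommGroup F] [NormedSpace ℝ F]

/-- the `i`-th Gaussian term -/
def Gterm (f : 𝓢(E, F)) (i : ℕ) : E → ℝ :=
  fun x => epsf f i * Real.exp (-((((i:ℝ)+1)⁻¹) * ‖x‖^2))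

lemma Gterm_pos (f : 𝓢(E, F)) (i : ℕ) (x : E) : 0 < Gterm f i x := by
  have := epsf_pos f i
  unfold Gterm
  positivity

lemma Gterm_le (f : 𝓢(E, F)) (i : ℕ) (x : E) : Gterm f i x ≤ epsf f i := by
  unfold Gterm
  have h1 : Real.exp (-((((i:ℝ)+1)⁻¹) * ‖x‖^2)) ≤ 1 := by
    rw [Real.exp_le_one_iff]
    have : (0:ℝ) ≤ (((i:ℝ)+1)⁻¹) * ‖x‖^2 := by positivity
    linarith
  nlinarith [epsf_pos f i]

lemma summable_eps_poly (f : 𝓢(E, F)) (p : ℕ) :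
    Summable (fun i : ℕ => epsf f i * (((i:ℝ)+1))^p) := by
  rw [← summable_nat_add_iff (p+2)]
  have b0 : Summable (fun n : ℕ => 1 / ((n:ℝ))^2) := Real.summable_one_div_nat_pow.mpr (by norm_num)
  have b1 : Summable (fun n : ℕ => 1 / (((n:ℕ):ℝ)+1)^2) := by
    have := (summable_nat_add_iff (f := fun n : ℕ => 1 / ((n:ℝ))^2) 1).mpr b0
    refine this.congr fun n => ?_
    push_cast
    ring_nf
  refine Summable.of_nonneg_of_le (fun n => ?_) (fun n => ?_)
    (b1.mul_left (Qf f ((p+2)^2) * 2^p * 2^2))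
  · have := epsf_pos f (n + (p+2))
    positivity
  · set k := n + (p+2) with hk
    have hkR : ((n:ℝ)+1) ≤ (k:ℝ) := by
      rw [hk]; push_cast; linarith
    have hk1 : (1:ℝ) ≤ (k:ℝ) := by
      rw [hk]; push_cast; linarith [Nat.cast_nonneg (α := ℝ) n]
    have hknn : (0:ℝ) < (k:ℝ) := by linarith
    have h1 : epsf f k ≤ Qf f ((p+2)^2) * (((k:ℝ))^(p+2))⁻¹ := epsf_le f (by omega)
    have hQ := Qf_one_le f ((p+2)^2)
    calc epsf f k * ((k:ℝ)+1)^p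
        ≤ (Qf f ((p+2)^2) * ((k:ℝ)^(p+2))⁻¹) * (2*(k:ℝ))^p := by
          apply mul_le_mul h1 (pow_le_pow_left₀ (by positivity) (by linarith) p)
            (by positivity) (by positivity)
      _ = Qf f ((p+2)^2) * 2^p * ((k:ℝ)^p / (k:ℝ)^(p+2)) := by
          rw [mul_pow]; field_simp
      _ = Qf f ((p+2)^2) * 2^p * ((k:ℝ)^2)⁻¹ := by
          congr 1
          rw [pow_add]
          field_simp
      _ ≤ Qf f ((p+2)^2) * 2^p * 2^2 * (1 / (((n:ℕ):ℝ)+1)^2) := by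
          rw [one_div]
          have hsq : ((n:ℝ)+1)^2 ≤ (k:ℝ)^2 := by nlinarith
          have hinv : ((k:ℝ)^2)⁻¹ ≤ (((n:ℝ)+1)^2)⁻¹ := by
            apply inv_anti₀ (by positivity) hsq
          calc Qf f ((p+2)^2) * 2^p * ((k:ℝ)^2)⁻¹
              ≤ Qf f ((p+2)^2) * 2^p * (((n:ℝ)+1)^2)⁻¹ := by
                apply mul_le_mul_of_nonneg_left hinv (by positivity)
            _ ≤ Qf f ((p+2)^2) * 2^p * 2^2 * (((n:ℝ)+1)^2)⁻¹ := by
                have hfac : Qf f ((p+2)^2) * 2^p ≤ Qf f ((p+2)^2) * 2^p * 2^2 := by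
                  nlinarith [pow_pos (show (0:ℝ)<2 by norm_num) p]
                exact mul_le_mul_of_nonneg_right hfac (by positivity)

lemma summable_eps (f : 𝓢(E, F)) : Summable (fun i : ℕ => epsf f i) := by
  have := summable_eps_poly f 0
  simpa using this

lemma summable_Gterm (f : 𝓢(E, F)) (x : E) : Summable (fun i : ℕ => Gterm f i x) :=
  Summable.of_nonneg_of_le (fun i => (Gterm_pos f i x).le) (fun i => Gterm_le f i x)
    (summable_eps f)

/-- the adaptive positive rotation-invariant Schwartz function, as a plain function -/
def GG (f : 𝓢(E, F)) : E → ℝ := fun x => ∑' i, Gterm f i x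

lemma GG_pos (f : 𝓢(E, F)) (x : E) : 0 < GG f x :=
  Summable.tsum_pos (summable_Gterm f x) (fun i => (Gterm_pos f i x).le) 0 (Gterm_pos f 0 x)

def Seps (f : 𝓢(E, F)) : ℝ := ∑' i, epsf f i

lemma GG_le (f : 𝓢(E, F)) (x : E) : GG f x ≤ Seps f :=
  Summable.tsum_le_tsum (fun i => Gterm_le f i x) (summable_Gterm f x) (summable_eps f)

lemma Seps_pos (f : 𝓢(E, F)) : 0 < Seps f := lt_of_lt_of_le (GG_pos f 0) (GG_le f 0)

lemma GG_lower (f : 𝓢(E, F)) (x : E) :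
    epsf f ⌈‖x‖^2⌉₊ * Real.exp (-1) ≤ GG f x := by
  set k := ⌈‖x‖^2⌉₊ with hk
  have h1 : epsf f k * Real.exp (-1) ≤ Gterm f k x := by
    unfold Gterm
    have hexp : Real.exp (-1) ≤ Real.exp (-((((k:ℝ)+1)⁻¹) * ‖x‖^2)) := by
      apply Real.exp_le_exp.2
      have h2 : ‖x‖^2 ≤ (k:ℝ) + 1 := by
        have := Nat.le_ceil (‖x‖^2)
        rw [← hk] at this
        linarith
      have h3 : (((k:ℝ)+1)⁻¹) * ‖x‖^2 ≤ 1 := by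
        have hmul := mul_le_mul_of_nonneg_left h2
          (inv_nonneg.mpr (by positivity : (0:ℝ) ≤ (k:ℝ)+1))
        rwa [inv_mul_cancel₀ (by positivity : ((k:ℝ)+1) ≠ 0)] at hmul
      linarith
    apply mul_le_mul_of_nonneg_left hexp (epsf_pos f k).le
  exact h1.trans (Summable.le_tsum (summable_Gterm f x) k (fun j _ => (Gterm_pos f j x).le))

/-- uniform derivative bounds for the terms -/
def Gv (f : 𝓢(E, F)) (m i : ℕ) : ℝ :=
  epsf f i * ((m ! : ℝ) * ((8*(((i:ℝ)+1))^2)^m * ((2*(m:ℝ))^(2*m) + 1)))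

lemma Gterm_contDiff (f : 𝓢(E, F)) (i : ℕ) :
    ContDiff ℝ (((⊤ : ℕ∞)) : WithTop ℕ∞) (Gterm f i) := by
  unfold Gterm
  exact contDiff_const.mul ((Real.contDiff_exp.comp (inner_contdiff _)).of_le le_top)

lemma Gterm_iter_bound (f : 𝓢(E, F)) (m i : ℕ) (x : E) :
    ‖iteratedFDeriv ℝ m (Gterm f i) x‖
      ≤ (m ! : ℝ) * (2*(1+‖x‖)^2)^m * Gterm f i x := by
  have hsm : Gterm f i = (epsf f i) • (fun y : E => Real.exp (-((((i:ℝ)+1)⁻¹) * ‖y‖^2))) := by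
    funext y; simp [Gterm, smul_eq_mul]
  have hrw : iteratedFDeriv ℝ m (Gterm f i) x
      = epsf f i • iteratedFDeriv ℝ m (fun y : E => Real.exp (-((((i:ℝ)+1)⁻¹) * ‖y‖^2))) x := by
    have hcd : ContDiff ℝ m (fun y : E => Real.exp (-((((i:ℝ)+1)⁻¹) * ‖y‖^2))) :=
      (Real.contDiff_exp.comp (inner_contdiff _)).of_le le_top
    rw [hsm, iteratedFDeriv_const_smul_apply hcd.contDiffAt]
  rw [hrw]
  refine (norm_smul_le (epsf f i)
    (iteratedFDeriv ℝ m (fun y : E => Real.exp (-((((i:ℝ)+1)⁻¹) * ‖y‖^2))) x)).trans ?_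
  have hc0 : (0:ℝ) ≤ (((i:ℝ)+1)⁻¹) := by positivity
  have hc1 : (((i:ℝ)+1)⁻¹) ≤ 1 := by
    rw [inv_le_one_iff₀]; right; linarith [Nat.cast_nonneg (α := ℝ) i]
  have hb := gauss_iter_bound (E := E) (((i:ℝ)+1)⁻¹) hc0 hc1 m x
  have heps : ‖epsf f i‖ = epsf f i := by
    rw [Real.norm_eq_abs, abs_of_pos (epsf_pos f i)]
  rw [heps]
  calc epsf f i * ‖iteratedFDeriv ℝ m (fun y : E => Real.exp (-((((i:ℝ)+1)⁻¹) * ‖y‖^2))) x‖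
      ≤ epsf f i * ((m ! : ℝ) * Real.exp (-((((i:ℝ)+1)⁻¹) * ‖x‖^2)) * (2*(1+‖x‖)^2)^m) :=
        mul_le_mul_of_nonneg_left hb (epsf_pos f i).le
    _ = (m ! : ℝ) * (2*(1+‖x‖)^2)^m * Gterm f i x := by
        unfold Gterm; ring

lemma Gterm_unif_bound (f : 𝓢(E, F)) (m i : ℕ) (x : E) :
    ‖iteratedFDeriv ℝ m (Gterm f i) x‖ ≤ Gv f m i := by
  refine (Gterm_iter_bound f m i x).trans ?_
  have hpg := poly_gauss_bound m (((i:ℝ)+1)) ‖x‖ (by linarith [Nat.cast_nonneg (α := ℝ) i])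
    (norm_nonneg x)
  unfold Gterm Gv
  have heps := (epsf_pos f i).le
  calc (m ! : ℝ) * (2*(1+‖x‖)^2)^m * (epsf f i * Real.exp (-((((i:ℝ)+1)⁻¹) * ‖x‖^2)))
      = (m ! : ℝ) * epsf f i * ((2*(1+‖x‖)^2)^m * Real.exp (-((((i:ℝ)+1)⁻¹) * ‖x‖^2))) := by
        ring
    _ ≤ (m ! : ℝ) * epsf f i * ((8*(((i:ℝ)+1))^2)^m * ((2*(m:ℝ))^(2*m) + 1)) := by
        apply mul_le_mul_of_nonneg_left hpg (by positivity)
    _ = epsf f i * ((m ! : ℝ) * ((8*(((i:ℝ)+1))^2)^m * ((2*(m:ℝ))^(2*m) + 1))) := by ring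

lemma summable_Gv (f : 𝓢(E, F)) (m : ℕ) : Summable (Gv f m) := by
  have h := (summable_eps_poly f (2*m)).mul_left
    ((m ! : ℝ) * 8^m * ((2*(m:ℝ))^(2*m) + 1))
  refine h.congr fun i => ?_
  unfold Gv
  rw [mul_pow (8:ℝ) (((i:ℝ)+1)^2) m, ← pow_mul ((i:ℝ)+1) 2 m]
  ring

lemma GG_contDiff (f : 𝓢(E, F)) : ContDiff ℝ (((⊤ : ℕ∞)) : WithTop ℕ∞) (GG f) := by
  unfold GG
  exact contDiff_tsum (fun i => Gterm_contDiff f i) (fun k _ => summable_Gv f k)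
    (fun k i x _ => Gterm_unif_bound f k i x)

lemma GG_iter_eq (f : 𝓢(E, F)) (m : ℕ) (x : E) :
    iteratedFDeriv ℝ m (GG f) x = ∑' i, iteratedFDeriv ℝ m (Gterm f i) x := by
  unfold GG
  exact iteratedFDeriv_tsum_apply (fun i => Gterm_contDiff f i) (fun k _ => summable_Gv f k)
    (fun k i x _ => Gterm_unif_bound f k i x) le_top x

lemma GG_iter_bound (f : 𝓢(E, F)) (m : ℕ) (x : E) :
    ‖iteratedFDeriv ℝ m (GG f) x‖ ≤ (m ! : ℝ) * (2*(1+‖x‖)^2)^m * GG f x := by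
  rw [GG_iter_eq f m x]
  have hsn : Summable (fun i => ‖iteratedFDeriv ℝ m (Gterm f i) x‖) :=
    Summable.of_nonneg_of_le (fun i => norm_nonneg _) (fun i => Gterm_unif_bound f m i x)
      (summable_Gv f m)
  refine (norm_tsum_le_tsum_norm hsn).trans ?_
  have hs2 : Summable (fun i => (m ! : ℝ) * (2*(1+‖x‖)^2)^m * Gterm f i x) :=
    (summable_Gterm f x).mul_left _
  refine (Summable.tsum_le_tsum (fun i => Gterm_iter_bound f m i x) hsn hs2).trans_eq ?_
  rw [tsum_mul_left]
  rfl

lemma GG_decay (f : 𝓢(E, F)) (k n : ℕ) :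
    ∃ C : ℝ, ∀ x : E, ‖x‖^k * ‖iteratedFDeriv ℝ n (GG f) x‖ ≤ C := by
  refine ⟨(n ! : ℝ) * ∑' i, epsf f i * ((8*(((i:ℝ)+1))^2)^(n+k) * ((2*((n+k:ℕ):ℝ))^(2*(n+k)) + 1)),
    fun x => ?_⟩
  have hx1 : (1:ℝ) ≤ 1+‖x‖ := by linarith [norm_nonneg x]
  have hP1 : (1:ℝ) ≤ 2*(1+‖x‖)^2 := by nlinarith
  have h1 : ‖x‖^k * ‖iteratedFDeriv ℝ n (GG f) x‖
      ≤ (n ! : ℝ) * (2*(1+‖x‖)^2)^(n+k) * GG f x := by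
    have hb := GG_iter_bound f n x
    have hxk : ‖x‖^k ≤ (2*(1+‖x‖)^2)^k := by
      apply pow_le_pow_left₀ (norm_nonneg x)
      nlinarith
    calc ‖x‖^k * ‖iteratedFDeriv ℝ n (GG f) x‖
        ≤ (2*(1+‖x‖)^2)^k * ((n ! : ℝ) * (2*(1+‖x‖)^2)^n * GG f x) := by
          apply mul_le_mul hxk hb (norm_nonneg _) (by positivity)
      _ = (n ! : ℝ) * (2*(1+‖x‖)^2)^(n+k) * GG f x := by
          rw [pow_add]; ring
  refine h1.trans ?_
  rw [mul_assoc]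
  apply mul_le_mul_of_nonneg_left _ (by positivity)
  -- (2*(1+‖x‖)²)^(n+k) * GG f x ≤ ∑' i, ...
  have hGx : (2*(1+‖x‖)^2)^(n+k) * GG f x
      = ∑' i, (2*(1+‖x‖)^2)^(n+k) * Gterm f i x := by
    rw [tsum_mul_left]; rfl
  rw [hGx]
  have hsl : Summable (fun i => (2*(1+‖x‖)^2)^(n+k) * Gterm f i x) :=
    (summable_Gterm f x).mul_left _
  have hsr : Summable (fun i =>
      epsf f i * ((8*(((i:ℝ)+1))^2)^(n+k) * ((2*((n+k:ℕ):ℝ))^(2*(n+k)) + 1))) := by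
    have h := (summable_eps_poly f (2*(n+k))).mul_left
      (8^(n+k) * ((2*((n+k:ℕ):ℝ))^(2*(n+k)) + 1))
    refine h.congr fun i => ?_
    rw [mul_pow (8:ℝ) (((i:ℝ)+1)^2) (n+k), ← pow_mul ((i:ℝ)+1) 2 (n+k)]
    ring
  refine Summable.tsum_le_tsum (fun i => ?_) hsl hsr
  have hpg := poly_gauss_bound (n+k) (((i:ℝ)+1)) ‖x‖
    (by linarith [Nat.cast_nonneg (α := ℝ) i]) (norm_nonneg x)
  unfold Gterm
  calc (2*(1+‖x‖)^2)^(n+k) * (epsf f i * Real.exp (-((((i:ℝ)+1)⁻¹) * ‖x‖^2)))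
      = epsf f i * ((2*(1+‖x‖)^2)^(n+k) * Real.exp (-((((i:ℝ)+1)⁻¹) * ‖x‖^2))) := by ring
    _ ≤ epsf f i * ((8*(((i:ℝ)+1))^2)^(n+k) * ((2*((n+k:ℕ):ℝ))^(2*(n+k)) + 1)) := by
        apply mul_le_mul_of_nonneg_left _ (epsf_pos f i).le
        exact hpg.trans_eq (by push_cast; ring_nf)

end GGsec

section InvSec
variable {E F : Type*} [NormedAddCommGroup E] [InnerProductSpace ℝ E]
  [NormedAddCommGroup F] [NormedSpace ℝ F]

lemma one_add_Seps_one_le (f : 𝓢(E, F)) : (1:ℝ) ≤ 1 + Seps f := by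
  linarith [Seps_pos f]

/-- padding powers of the reciprocal -/
lemma GG_inv_pow_pad (f : 𝓢(E, F)) {i m : ℕ} (him : i ≤ m) (x : E) :
    ((GG f x)^(i+1))⁻¹ ≤ (1 + Seps f)^m * ((GG f x)^(m+1))⁻¹ := by
  have hG := GG_pos f x
  have hS := Seps_pos f
  have h1 : (GG f x)^(m+1) ≤ (1 + Seps f)^m * (GG f x)^(i+1) := by
    have e1 : (GG f x)^(m+1) = (GG f x)^(i+1) * (GG f x)^(m-i) := by
      rw [← pow_add]; congr 1; omega
    rw [e1]
    have h2 : (GG f x)^(m-i) ≤ (1 + Seps f)^m := by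
      calc (GG f x)^(m-i) ≤ (1 + Seps f)^(m-i) := by
            apply pow_le_pow_left₀ hG.le
            have := GG_le f x; linarith
        _ ≤ (1 + Seps f)^m := by
            apply pow_le_pow_right₀ (one_add_Seps_one_le f) (by omega)
    calc (GG f x)^(i+1) * (GG f x)^(m-i)
        ≤ (GG f x)^(i+1) * (1 + Seps f)^m := by
          apply mul_le_mul_of_nonneg_left h2 (by positivity)
      _ = (1 + Seps f)^m * (GG f x)^(i+1) := by ring
  calc ((GG f x)^(i+1))⁻¹ ≤ ((GG f x)^(m+1) / (1 + Seps f)^m)⁻¹ := by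
        apply inv_anti₀ (by positivity)
        rw [div_le_iff₀ (by positivity)]
        calc (GG f x)^(m+1) ≤ (1 + Seps f)^m * (GG f x)^(i+1) := h1
          _ = (GG f x)^(i+1) * (1 + Seps f)^m := by ring
    _ = (1 + Seps f)^m * ((GG f x)^(m+1))⁻¹ := by
        rw [inv_div]
        rw [div_eq_mul_inv]

/-- the constant in the reciprocal derivative bound -/
def Kc (f : 𝓢(E, F)) (m : ℕ) : ℝ :=
  (m ! : ℝ) * ((m ! : ℝ) * (1 + Seps f)^m) * ((m ! : ℝ) * 2 * (1 + Seps f))^m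

lemma Kc_pos (f : 𝓢(E, F)) (m : ℕ) : 0 < Kc f m := by
  have h1 : (0:ℝ) < (m ! : ℝ) := by exact_mod_cast Nat.factorial_pos m
  have := Seps_pos f
  unfold Kc
  positivity

lemma GG_inv_iter_bound (f : 𝓢(E, F)) (m : ℕ) (x : E) :
    ‖iteratedFDeriv ℝ m (fun y => (GG f y)⁻¹) x‖
      ≤ Kc f m * (1+‖x‖)^(2*m) * ((GG f x)^(m+1))⁻¹ := by
  have hG := GG_pos f x
  have hS := Seps_pos f
  have hfact : (1:ℝ) ≤ (m ! : ℝ) := by exact_mod_cast Nat.one_le_iff_ne_zero.mpr m.factorial_ne_zero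
  have hx1 : (1:ℝ) ≤ 1 + ‖x‖ := by linarith [norm_nonneg x]
  have hcomp : (fun y => (GG f y)⁻¹) = (Inv.inv : ℝ → ℝ) ∘ (GG f) := rfl
  rw [hcomp, ← iteratedFDerivWithin_univ]
  have hbound := norm_iteratedFDerivWithin_comp_le
    (g := (Inv.inv : ℝ → ℝ)) (f := GG f) (n := m) (s := (Set.univ : Set E)) (t := Set.Ioi 0)
    (N := (∞ : WithTop ℕ∞))
    ((contDiffOn_inv ℝ).mono (fun y hy => Set.mem_compl_singleton_iff.mpr (ne_of_gt hy)))
    (GG_contDiff f).contDiffOn (mod_cast le_top) (uniqueDiffOn_Ioi 0) uniqueDiffOn_univ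
    (fun y _ => GG_pos f y) (Set.mem_univ x)
    (C := (m ! : ℝ) * (1 + Seps f)^m * ((GG f x)^(m+1))⁻¹)
    (D := (m ! : ℝ) * (2*(1+‖x‖)^2) * (1 + Seps f))
    (fun i hi => ?_) (fun i hi1 hi2 => ?_)
  · refine hbound.trans ?_
    have hDpow : ((m ! : ℝ) * (2*(1+‖x‖)^2) * (1 + Seps f))^m
        = ((m ! : ℝ) * 2 * (1 + Seps f))^m * (1+‖x‖)^(2*m) := by
      rw [show (m ! : ℝ) * (2*(1+‖x‖)^2) * (1 + Seps f)
          = ((m ! : ℝ) * 2 * (1 + Seps f)) * (1+‖x‖)^2 by ring]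
      rw [mul_pow, ← pow_mul]
    rw [hDpow]
    unfold Kc
    ring_nf
    exact le_rfl
  · -- derivatives of inv within Ioi 0 at GG f x
    rw [iteratedFDerivWithin_of_isOpen i isOpen_Ioi (Set.mem_Ioi.mpr hG)]
    rw [inv_iter_norm i (GG f x) hG]
    have h1 : (i ! : ℝ) ≤ (m ! : ℝ) := by exact_mod_cast Nat.factorial_le hi
    have h2 := GG_inv_pow_pad f hi x
    have h3 : (0:ℝ) ≤ ((GG f x)^(i+1))⁻¹ := by positivity
    calc (i ! : ℝ) * ((GG f x)^(i+1))⁻¹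
        ≤ (m ! : ℝ) * ((1 + Seps f)^m * ((GG f x)^(m+1))⁻¹) := by
          apply mul_le_mul h1 h2 h3 (by positivity)
      _ = (m ! : ℝ) * (1 + Seps f)^m * ((GG f x)^(m+1))⁻¹ := by ring
  · -- derivatives of GG within univ
    rw [iteratedFDerivWithin_univ]
    refine (GG_iter_bound f i x).trans ?_
    have h1 : (i ! : ℝ) ≤ ((m ! : ℝ))^i := by
      calc (i ! : ℝ) ≤ (m ! : ℝ) := by exact_mod_cast Nat.factorial_le hi2
        _ ≤ ((m ! : ℝ))^i := le_self_pow₀ hfact (by omega)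
    have h2 : GG f x ≤ (1 + Seps f)^i := by
      calc GG f x ≤ Seps f := GG_le f x
        _ ≤ 1 + Seps f := by linarith
        _ ≤ (1 + Seps f)^i := le_self_pow₀ (one_add_Seps_one_le f) (by omega)
    calc (i ! : ℝ) * (2*(1+‖x‖)^2)^i * GG f x
        ≤ ((m ! : ℝ))^i * (2*(1+‖x‖)^2)^i * (1 + Seps f)^i := by
          apply mul_le_mul (mul_le_mul h1 le_rfl (by positivity) (by positivity)) h2
            (GG_pos f x).le (by positivity)
      _ = ((m ! : ℝ) * (2*(1+‖x‖)^2) * (1 + Seps f))^i := by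
          rw [← mul_pow, ← mul_pow]

end InvSec

section F0sec
variable {E F : Type*} [NormedAddCommGroup E] [InnerProductSpace ℝ E]
  [NormedAddCommGroup F] [NormedSpace ℝ F]

lemma GG_inv_contDiff (f : 𝓢(E, F)) :
    ContDiff ℝ ∞ (fun y => (GG f y)⁻¹) :=
  (GG_contDiff f).inv (fun y => (GG_pos f y).ne')

lemma f0_contDiff (f : 𝓢(E, F)) : ContDiff ℝ ∞ (fun x => (GG f x)⁻¹ • f x) :=
  (GG_inv_contDiff f).smul f.smooth'

lemma f0_decay (f : 𝓢(E, F)) (k n : ℕ) :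
    ∃ C : ℝ, ∀ x : E, ‖x‖^k * ‖iteratedFDeriv ℝ n (fun y => (GG f y)⁻¹ • f y) x‖ ≤ C := by
  have hkey : ∀ i : ℕ, ∃ C' : ℝ, 0 < C' ∧ ∀ x : E,
      (1+‖x‖)^(k+2*n) * ‖iteratedFDeriv ℝ (n-i) (⇑f) x‖
        ≤ C' * (epsf f ⌈‖x‖^2⌉₊)^(n+1) :=
    fun i => epsf_key f (k+2*n) (n-i) (n+1)
  choose CC hCCpos hCC using hkey
  refine ⟨∑ i ∈ Finset.range (n+1), (n.choose i : ℝ) * Kc f i * (1 + Seps f)^n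
    * Real.exp 1 ^ (n+1) * CC i, fun x => ?_⟩
  have hx1 : (1:ℝ) ≤ 1 + ‖x‖ := by linarith [norm_nonneg x]
  have hG := GG_pos f x
  have hS := Seps_pos f
  have hεpos := epsf_pos f ⌈‖x‖^2⌉₊
  have hsmul := norm_iteratedFDeriv_smul_le (𝕜 := ℝ) (𝕜' := ℝ)
    (GG_inv_contDiff f) f.smooth' x (n := n) (mod_cast le_top)
  have step1 : ‖x‖^k * ‖iteratedFDeriv ℝ n (fun y => (GG f y)⁻¹ • f y) x‖
      ≤ (1+‖x‖)^k * ∑ i ∈ Finset.range (n+1), (n.choose i : ℝ)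
        * ‖iteratedFDeriv ℝ i (fun y => (GG f y)⁻¹) x‖
        * ‖iteratedFDeriv ℝ (n-i) (⇑f) x‖ := by
    have hxk : ‖x‖^k ≤ (1+‖x‖)^k := pow_le_pow_left₀ (norm_nonneg x) (by linarith) k
    apply mul_le_mul hxk hsmul (norm_nonneg _) (by positivity)
  refine step1.trans ?_
  rw [Finset.mul_sum]
  apply Finset.sum_le_sum
  intro i hi
  have him : i ≤ n := Nat.lt_succ_iff.mp (Finset.mem_range.mp hi)
  have hGinv : ((GG f x)^(n+1))⁻¹
      ≤ Real.exp 1 ^ (n+1) * ((epsf f ⌈‖x‖^2⌉₊)^(n+1))⁻¹ := by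
    have hlow := GG_lower f x
    have hbase : (0:ℝ) < epsf f ⌈‖x‖^2⌉₊ * Real.exp (-1) := by positivity
    have hpow : (epsf f ⌈‖x‖^2⌉₊ * Real.exp (-1))^(n+1) ≤ (GG f x)^(n+1) :=
      pow_le_pow_left₀ hbase.le hlow _
    have h2 : ((GG f x)^(n+1))⁻¹ ≤ ((epsf f ⌈‖x‖^2⌉₊ * Real.exp (-1))^(n+1))⁻¹ :=
      inv_anti₀ (pow_pos hbase _) hpow
    refine h2.trans_eq ?_
    rw [Real.exp_neg, mul_pow, mul_inv, inv_pow, inv_inv]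
    ring
  have hA2 : ‖iteratedFDeriv ℝ i (fun y => (GG f y)⁻¹) x‖
      ≤ Kc f i * (1+‖x‖)^(2*n) * ((1 + Seps f)^n * (((GG f x)^(n+1))⁻¹)) := by
    refine (GG_inv_iter_bound f i x).trans ?_
    have h1 : (1+‖x‖)^(2*i) ≤ (1+‖x‖)^(2*n) := pow_le_pow_right₀ hx1 (by omega)
    have h2 := GG_inv_pow_pad f him x
    have hKc := (Kc_pos f i).le
    have hGinn : (0:ℝ) ≤ ((GG f x)^(i+1))⁻¹ := inv_nonneg.mpr (pow_nonneg hG.le _)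
    exact mul_le_mul (mul_le_mul le_rfl h1 (by positivity) hKc) h2 hGinn
      (mul_nonneg hKc (by positivity))
  calc (1+‖x‖)^k * ((n.choose i : ℝ)
        * ‖iteratedFDeriv ℝ i (fun y => (GG f y)⁻¹) x‖
        * ‖iteratedFDeriv ℝ (n-i) (⇑f) x‖)
      ≤ (1+‖x‖)^k * ((n.choose i : ℝ)
        * (Kc f i * (1+‖x‖)^(2*n) * ((1 + Seps f)^n * (((GG f x)^(n+1))⁻¹)))
        * ‖iteratedFDeriv ℝ (n-i) (⇑f) x‖) := by
        have hGn : (0:ℝ) ≤ ((GG f x)^(n+1))⁻¹ := inv_nonneg.mpr (pow_nonneg hG.le _)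
        have hA2nn : (0:ℝ) ≤ Kc f i * (1+‖x‖)^(2*n) * ((1 + Seps f)^n * (((GG f x)^(n+1))⁻¹)) := by
          apply mul_nonneg (mul_nonneg (Kc_pos f i).le (by positivity))
          exact mul_nonneg (by positivity) hGn
        apply mul_le_mul_of_nonneg_left _ (by positivity : (0:ℝ) ≤ (1+‖x‖)^k)
        apply mul_le_mul (mul_le_mul_of_nonneg_left hA2 (by positivity)) le_rfl
          (norm_nonneg _) (mul_nonneg (by positivity) hA2nn)
    _ = (n.choose i : ℝ) * Kc f i * (1 + Seps f)^n
        * ((((GG f x)^(n+1))⁻¹) * ((1+‖x‖)^(k+2*n) * ‖iteratedFDeriv ℝ (n-i) (⇑f) x‖)) := by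
        rw [pow_add]; ring
    _ ≤ (n.choose i : ℝ) * Kc f i * (1 + Seps f)^n
        * ((Real.exp 1 ^ (n+1) * ((epsf f ⌈‖x‖^2⌉₊)^(n+1))⁻¹)
          * (CC i * (epsf f ⌈‖x‖^2⌉₊)^(n+1))) := by
        have hc1 : (0:ℝ) ≤ (n.choose i : ℝ) * Kc f i * (1 + Seps f)^n := by
          have := (Kc_pos f i).le; positivity
        apply mul_le_mul_of_nonneg_left _ hc1
        have he : (0:ℝ) ≤ Real.exp 1 ^ (n+1) * ((epsf f ⌈‖x‖^2⌉₊)^(n+1))⁻¹ :=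
          mul_nonneg (by positivity) (inv_nonneg.mpr (pow_nonneg hεpos.le _))
        apply mul_le_mul hGinv (hCC i x) (by positivity) he
    _ = (n.choose i : ℝ) * Kc f i * (1 + Seps f)^n * Real.exp 1 ^ (n+1) * CC i
        * (((epsf f ⌈‖x‖^2⌉₊)^(n+1))⁻¹ * (epsf f ⌈‖x‖^2⌉₊)^(n+1)) := by ring
    _ = (n.choose i : ℝ) * Kc f i * (1 + Seps f)^n * Real.exp 1 ^ (n+1) * CC i := by
        rw [inv_mul_cancel₀ (by positivity), mul_one]

/-- the factor as a Schwartz map -/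
def gS (f : 𝓢(E, F)) : 𝓢(E, ℝ) :=
  { toFun := GG f
    smooth' := GG_contDiff f
    decay' := GG_decay f }

/-- the quotient as a Schwartz map -/
def f0S (f : 𝓢(E, F)) : 𝓢(E, F) :=
  { toFun := fun x => (GG f x)⁻¹ • f x
    smooth' := f0_contDiff f
    decay' := f0_decay f }

lemma gS_apply (f : 𝓢(E, F)) (x : E) : gS f x = GG f x := rfl
lemma f0S_apply (f : 𝓢(E, F)) (x : E) : f0S f x = (GG f x)⁻¹ • f x := rfl

end F0sec

end Aux

/-- For every Schwartz function `f` on `ℝ^d` there exist a Schwartz function `f₀` and a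
strictly positive, rotation-invariant Schwartz function `g` with `f = f₀ * g`. -/
theorem stmt0 (d : ℕ) (f : SchwartzMap (EuclideanSpace ℝ (Fin d)) ℂ) :
    ∃ (f₀ : SchwartzMap (EuclideanSpace ℝ (Fin d)) ℂ)
      (g : SchwartzMap (EuclideanSpace ℝ (Fin d)) ℝ),
      (∀ x, 0 < g x) ∧
      (∀ x y, ‖x‖ = ‖y‖ → g x = g y) ∧
      (∀ x, f x = f₀ x * (g x : ℂ)) := by
  refine ⟨f0S f, gS f, fun x => GG_pos f x, fun x y hxy => ?_, fun x => ?_⟩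
  · show GG f x = GG f y
    unfold GG Gterm
    rw [hxy]
  · show f x = ((GG f x)⁻¹ • f x) * ((GG f x : ℝ) : ℂ)
    have hne : (GG f x : ℝ) ≠ 0 := (GG_pos f x).ne'
    rw [Complex.real_smul]
    have hne' : ((GG f x : ℝ) : ℂ) ≠ 0 := by exact_mod_cast hne
    field_simp
    rw [mul_assoc, ← Complex.ofReal_mul, one_div_mul_cancel hne, Complex.ofReal_one, mul_one]
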